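/- arXiv:1708.01166 — 3 statements merged into one kernel-verified Lean document; each statement's English description precedes it below -/
import Mathlib

section
/- Let k be a field complete with respect to a nontrivial nonarchimedean absolute value, and let E(k) ⊆ k[[T]] be the ring of entire power series. Then the unit group of E(k) is exactly k^×: a power series f = Σ_{i≥0} aᵢTⁱ ∈ E(k) is invertible in E(k) if and only if a₀ ≠ 0 and aᵢ = 0 for all i ≥ 1. In particular, if f, g ∈ k[[T]] are both entire and f·g = 1 in k[[T]], then f is a nonzero constant. -/
/-- A power series `f = Σ aᵢ Tⁱ` over a normed field is *entire* (i.e. lies in the ring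
`E(k) = 𝒪(𝔸¹_rig)` of everywhere-convergent power series) if for every real `r > 0`
the sequence `‖aᵢ‖ * rⁱ` tends to `0`. -/
def IsEntire {k : Type*} [NormedField k] (f : PowerSeries k) : Prop :=
  ∀ r : ℝ, 0 < r →
    Filter.Tendsto (fun i : ℕ => ‖(PowerSeries.coeff i) f‖ * r ^ i) Filter.atTop (nhds 0)

open Filter

lemma exists_min_argmax (u : ℕ → ℝ) (h0 : 0 < u 0)
    (ht : Tendsto u atTop (nhds 0)) :
    ∃ m, (∀ j, u j ≤ u m) ∧ (∀ j, j < m → u j < u m) := by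
  classical
  have hev : ∀ᶠ i in atTop, u i < u 0 := ht.eventually_lt_const h0
  obtain ⟨N, hN⟩ := eventually_atTop.mp hev
  obtain ⟨b, hb, hbmax⟩ := Finset.exists_max_image (Finset.range (N+1)) u ⟨0, by simp⟩
  have hP : ∃ m, ∀ j, u j ≤ u m := by
    refine ⟨b, fun j => ?_⟩
    by_cases hj : j ≤ N
    · exact hbmax j (Finset.mem_range.mpr (Nat.lt_succ_of_le hj))
    · exact le_trans (hN j (le_of_not_ge hj)).le (hbmax 0 (by simp))
  refine ⟨Nat.find hP, Nat.find_spec hP, fun j hj => ?_⟩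
  have hle := Nat.find_spec hP j
  rcases lt_or_eq_of_le hle with h | h
  · exact h
  · exact absurd (fun j' => h ▸ Nat.find_spec hP j') (Nat.find_min hP hj)

lemma key_bound {k : Type*} [NontriviallyNormedField k] [IsUltrametricDist k]
    (f g : PowerSeries k) (hf : IsEntire f) (hg : IsEntire g) (h : f * g = 1)
    {r : ℝ} (hr : 0 < r) :
    ∀ j, ‖(PowerSeries.coeff j) f‖ * r ^ j ≤ ‖(PowerSeries.coeff 0) f‖ := by
  classical
  set a : ℕ → k := fun i => PowerSeries.coeff i f with ha
  set b : ℕ → k := fun i => PowerSeries.coeff i g with hb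
  have h00 : a 0 * b 0 = 1 := by
    have := congrArg (PowerSeries.coeff 0) h
    simp only [PowerSeries.coeff_mul, Finset.Nat.antidiagonal_zero, Finset.sum_singleton,
      PowerSeries.coeff_one, if_pos rfl] at this
    exact this
  have ha0 : a 0 ≠ 0 := left_ne_zero_of_mul_eq_one h00
  have hb0 : b 0 ≠ 0 := right_ne_zero_of_mul_eq_one h00
  set u : ℕ → ℝ := fun i => ‖a i‖ * r ^ i with hu
  set v : ℕ → ℝ := fun i => ‖b i‖ * r ^ i with hv
  have hu0 : 0 < u 0 := by simp [hu, norm_pos_iff, ha0]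
  have hv0 : 0 < v 0 := by simp [hv, norm_pos_iff, hb0]
  obtain ⟨m, hm, hmlt⟩ := exists_min_argmax u hu0 (hf r hr)
  obtain ⟨n, hn, hnlt⟩ := exists_min_argmax v hv0 (hg r hr)
  have hum : 0 < u m := lt_of_lt_of_le hu0 (hm 0)
  have hvn : 0 < v n := lt_of_lt_of_le hv0 (hn 0)
  have hmn : m + n = 0 := by
    by_contra hmn
    have hcoeff : ∑ p ∈ Finset.HasAntidiagonal.antidiagonal (m+n), a p.1 * b p.2 = 0 := by
      have := congrArg (PowerSeries.coeff (m+n)) h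
      rw [PowerSeries.coeff_mul] at this
      simpa [PowerSeries.coeff_one, hmn, (show ¬(m = 0 ∧ n = 0) by omega)] using this
    have hmem : ((m, n) : ℕ × ℕ) ∈ Finset.HasAntidiagonal.antidiagonal (m+n) :=
      Finset.HasAntidiagonal.mem_antidiagonal.mpr rfl
    rw [← Finset.add_sum_erase _ _ hmem] at hcoeff
    have heq : a m * b n = -∑ p ∈ (Finset.HasAntidiagonal.antidiagonal (m+n)).erase (m, n), a p.1 * b p.2 :=
      eq_neg_of_add_eq_zero_left hcoeff
    -- each remaining term is strictly smaller in norm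
    have hterm : ∀ p ∈ (Finset.HasAntidiagonal.antidiagonal (m+n)).erase (m, n),
        ‖a p.1 * b p.2‖ < ‖a m * b n‖ := by
      intro p hp
      obtain ⟨hpne, hpsum⟩ := Finset.mem_erase.mp hp
      have hpsum' : p.1 + p.2 = m + n := Finset.HasAntidiagonal.mem_antidiagonal.mp hpsum
      have hne : ¬(p.1 = m ∧ p.2 = n) := fun hc => hpne (Prod.ext hc.1 hc.2)
      have hprod : u p.1 * v p.2 < u m * v n := by
        rcases lt_or_ge p.1 m with h1 | h1
        · calc u p.1 * v p.2 ≤ u p.1 * v n :=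
                mul_le_mul_of_nonneg_left (hn p.2) (by positivity)
            _ < u m * v n := mul_lt_mul_of_pos_right (hmlt p.1 h1) hvn
        · have h2 : p.2 < n := by omega
          calc u p.1 * v p.2 ≤ u m * v p.2 :=
                mul_le_mul_of_nonneg_right (hm p.1) (by positivity)
            _ < u m * v n := mul_lt_mul_of_pos_left (hnlt p.2 h2) hum
      have hexp : (0:ℝ) < r ^ (m+n) := pow_pos hr _
      have e1 : ‖a p.1 * b p.2‖ * r ^ (m+n) = u p.1 * v p.2 := by
        rw [norm_mul, hu, hv]
        rw [← hpsum', pow_add]; ring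
      have e2 : ‖a m * b n‖ * r ^ (m+n) = u m * v n := by
        rw [norm_mul, hu, hv, pow_add]; ring
      have := hprod
      rw [← e1, ← e2] at this
      exact lt_of_mul_lt_mul_right this hexp.le
    have hpos : 0 < ‖a m * b n‖ := by
      rw [norm_mul]
      have : 0 < ‖a m‖ := by
        by_contra hc
        push_neg at hc
        have : ‖a m‖ = 0 := le_antisymm hc (norm_nonneg _)
        rw [hu] at hum
        simp only [this, zero_mul] at hum
        exact lt_irrefl _ hum
      have : 0 < ‖b n‖ := by
        by_contra hc
        push_neg at hc
        have : ‖b n‖ = 0 := le_antisymm hc (norm_nonneg _)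
        rw [hv] at hvn
        simp only [this, zero_mul] at hvn
        exact lt_irrefl _ hvn
      positivity
    rcases Finset.eq_empty_or_nonempty ((Finset.HasAntidiagonal.antidiagonal (m+n)).erase (m, n)) with he | he
    · rw [he, Finset.sum_empty, neg_zero] at heq
      rw [heq, norm_zero] at hpos
      exact lt_irrefl _ hpos
    · obtain ⟨i, hi, hile⟩ := IsUltrametricDist.exists_norm_finset_sum_le_of_nonempty he
        (fun p : ℕ × ℕ => a p.1 * b p.2)
      have : ‖a m * b n‖ ≤ ‖a i.1 * b i.2‖ := by
        rw [heq, norm_neg]; exact hile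
      exact absurd (lt_of_le_of_lt this (hterm i hi)) (lt_irrefl _)
  have hm0 : m = 0 := Nat.eq_zero_of_add_eq_zero_right hmn
  intro j
  have := hm j
  rw [hu, hm0] at this
  simp only [pow_zero, mul_one] at this
  simpa [ha, PowerSeries.coeff_zero_eq_constantCoeff] using this

/-- Over a field `k` that is complete with respect to a nontrivial nonarchimedean absolute
value, the unit group of the ring `E(k)` of entire power series is exactly `k^×`:
an entire power series `f = Σ aᵢ Tⁱ` is invertible in `E(k)` if and only if `a₀ ≠ 0` and
`aᵢ = 0` for all `i ≥ 1`.  In particular, if `f, g` are entire and `f * g = 1`, then `f` is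
a nonzero constant. -/
theorem isUnit_entire_iff_constant {k : Type*} [NontriviallyNormedField k]
    [IsUltrametricDist k] [CompleteSpace k] :
    (∀ f : PowerSeries k, IsEntire f →
      ((∃ g : PowerSeries k, IsEntire g ∧ f * g = 1) ↔
        ((PowerSeries.coeff 0) f ≠ 0 ∧ ∀ i : ℕ, 1 ≤ i → (PowerSeries.coeff i) f = 0))) ∧
    (∀ f g : PowerSeries k, IsEntire f → IsEntire g → f * g = 1 →
      ((PowerSeries.coeff 0) f ≠ 0 ∧ ∀ i : ℕ, 1 ≤ i → (PowerSeries.coeff i) f = 0)) := by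
  have main : ∀ f g : PowerSeries k, IsEntire f → IsEntire g → f * g = 1 →
      ((PowerSeries.coeff 0) f ≠ 0 ∧ ∀ i : ℕ, 1 ≤ i → (PowerSeries.coeff i) f = 0) := by
    intro f g hf hg h
    have h00 : (PowerSeries.coeff 0) f * (PowerSeries.coeff 0) g = 1 := by
      have := congrArg (PowerSeries.coeff 0) h
      simp only [PowerSeries.coeff_mul, Finset.Nat.antidiagonal_zero, Finset.sum_singleton,
        PowerSeries.coeff_one, if_pos rfl] at this
      exact this
    refine ⟨left_ne_zero_of_mul_eq_one h00, ?_⟩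
    intro i hi
    by_contra hai
    have hpos : 0 < ‖(PowerSeries.coeff i) f‖ := norm_pos_iff.mpr hai
    set c0 := ‖(PowerSeries.coeff 0) f‖ with hc0
    set ci := ‖(PowerSeries.coeff i) f‖ with hci
    set r : ℝ := max 1 ((c0 + 1) / ci) with hrdef
    have hr : 0 < r := lt_of_lt_of_le one_pos (le_max_left _ _)
    have hb := key_bound f g hf hg h hr i
    have hr1 : (1:ℝ) ≤ r := le_max_left _ _
    have hri : r ≤ r ^ i := le_self_pow₀ hr1 (by omega)
    have hdiv : (c0 + 1) / ci ≤ r := le_max_right _ _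
    have h1 : c0 + 1 ≤ ci * r := by
      rw [div_le_iff₀ hpos] at hdiv
      linarith [hdiv]
    have h2 : ci * r ≤ ci * r ^ i := mul_le_mul_of_nonneg_left hri hpos.le
    have : c0 + 1 ≤ c0 := le_trans (le_trans h1 h2) hb
    linarith
  refine ⟨?_, main⟩
  intro f hf
  constructor
  · rintro ⟨g, hg, hfg⟩
    exact main f g hf hg hfg
  · rintro ⟨h0, hcoef⟩
    refine ⟨PowerSeries.C ((PowerSeries.coeff 0) f)⁻¹, ?_, ?_⟩
    · intro r hr
      refine Filter.Tendsto.congr' ?_ (tendsto_const_nhds (x := (0:ℝ)))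
      filter_upwards [Filter.eventually_ge_atTop 1] with i hi
      simp [PowerSeries.coeff_C, Nat.one_le_iff_ne_zero.mp hi]
    · have hfC : f = PowerSeries.C ((PowerSeries.coeff 0) f) := by
        ext j
        rcases Nat.eq_zero_or_pos j with rfl | hj
        · simp [PowerSeries.coeff_C]
        · simp [PowerSeries.coeff_C, Nat.pos_iff_ne_zero.mp hj, hcoef j hj]
      conv_lhs => rw [hfC]
      have h0' : (PowerSeries.constantCoeff) f ≠ 0 := by
        simpa [PowerSeries.coeff_zero_eq_constantCoeff] using h0
      rw [← map_mul]
      simp [PowerSeries.coeff_zero_C, mul_inv_cancel₀ h0']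
end

section
/- Let A be a commutative ring equipped with a power-multiplicative nonarchimedean ring norm ‖·‖ with respect to which A is complete, and let E(A) ⊆ A[[T]] be the subring of power series f = Σ_{i≥0} fᵢTⁱ such that for every real r > 0 the sequence (‖fᵢ‖·rⁱ)_i tends to 0. Then f ∈ E(A) is a unit of E(A) if and only if f₀ is a unit of A and fᵢ = 0 for all i ≥ 1; that is, the unit group of E(A) is isomorphic to A^×. (This is the statement 𝒪(Sp A × A¹_rig)^× ≅ A^× for a reduced affinoid algebra A.) -/
open Filter Finset
set_option linter.unusedSectionVars false

noncomputable section

namespace EntireUnitsAux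

variable {A : Type*} [NormedCommRing A] [NormOneClass A] [IsUltrametricDist A]

/-- The candidate seminorms in the Zorn argument: power-multiplicative nonarchimedean
submultiplicative seminorms bounded by the norm, with `p 1 = 1`, for which the fixed
element `a` is "norm-multiplicative". -/
structure IsGood (a : A) (p : A → ℝ) : Prop where
  one : p 1 = 1
  nonneg : ∀ x, 0 ≤ p x
  nonarch : ∀ x y, p (x + y) ≤ max (p x) (p y)
  mul_le : ∀ x y, p (x * y) ≤ p x * p y
  neg : ∀ x, p (-x) = p x
  powMul : IsPowMul p
  le_norm : ∀ x, p x ≤ ‖x‖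
  mul_a : ∀ x, p (a * x) = ‖a‖ * p x

theorem IsGood.zero {a : A} {p : A → ℝ} (hp : IsGood a p) : p 0 = 0 :=
  le_antisymm (by simpa using hp.le_norm 0) (hp.nonneg 0)

/-- Package a good function as a `RingSeminorm`. -/
def IsGood.toRingSeminorm {a : A} {p : A → ℝ} (hp : IsGood a p) : RingSeminorm A where
  toFun := p
  map_zero' := hp.zero
  add_le' x y := (hp.nonarch x y).trans
    (max_le (le_add_of_nonneg_right (hp.nonneg y)) (le_add_of_nonneg_left (hp.nonneg x)))
  neg' := hp.neg
  mul_le' := hp.mul_le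

@[simp] theorem IsGood.toRingSeminorm_apply {a : A} {p : A → ℝ} (hp : IsGood a p) (x : A) :
    hp.toRingSeminorm x = p x := rfl

theorem IsGood.apply_a {a : A} {p : A → ℝ} (hp : IsGood a p) : p a = ‖a‖ := by
  simpa [hp.one] using hp.mul_a 1

theorem isGood_nonempty (hnorm : IsPowMul ((‖·‖) : A → ℝ)) {a : A} (ha : a ≠ 0) :
    ∃ p : A → ℝ, IsGood a p := by
  have h1 : (normRingSeminorm A) 1 ≤ 1 := le_of_eq (norm_one : ‖(1:A)‖ = 1)
  have hc : (normRingSeminorm A) a ≠ 0 := by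
    show ‖a‖ ≠ 0
    simpa using ha
  have hnorm' : IsPowMul ⇑(normRingSeminorm A) := hnorm
  refine ⟨seminormFromConst' a (normRingSeminorm A), ?_, ?_, ?_, ?_, ?_, ?_, ?_, ?_⟩
  · exact seminormFromConst_one h1 hc hnorm'
  · exact fun x => apply_nonneg (seminormFromConst h1 hc hnorm') x
  · exact seminormFromConst_isNonarchimedean h1 hc hnorm'
      (fun x y => IsUltrametricDist.isNonarchimedean_norm x y)
  · exact fun x y => map_mul_le_mul (seminormFromConst h1 hc hnorm') x y
  · exact fun x => map_neg_eq_map (seminormFromConst h1 hc hnorm') x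
  · exact seminormFromConst_isPowMul h1 hc hnorm'
  · exact fun x => seminormFromConst_le_seminorm h1 hc hnorm' x
  · intro x
    rw [seminormFromConst_const_mul h1 hc hnorm' x, seminormFromConst_apply_c h1 hc hnorm']
    rfl
/-- Pointwise infimum of a nonempty chain of good seminorms is good. -/
theorem chain_lb {a : A} {c : Set (A → ℝ)} (hsub : ∀ p ∈ c, IsGood a p)
    (hcomp : ∀ p₁ ∈ c, ∀ p₂ ∈ c, p₁ ≤ p₂ ∨ p₂ ≤ p₁)
    (hne : c.Nonempty) : ∃ q : A → ℝ, IsGood a q ∧ ∀ p ∈ c, q ≤ p := by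
  haveI : Nonempty c := hne.to_subtype
  set q : A → ℝ := fun x => ⨅ p : c, (p : A → ℝ) x with hqdef
  have hbdd : ∀ x : A, BddBelow (Set.range fun p : c => (p : A → ℝ) x) := by
    intro x
    refine ⟨0, ?_⟩
    rintro r ⟨p, rfl⟩
    exact (hsub p p.2).nonneg x
  have hql : ∀ p ∈ c, ∀ x, q x ≤ p x := fun p hp x => ciInf_le (hbdd x) ⟨p, hp⟩
  have hq0 : ∀ x, 0 ≤ q x := fun x => le_ciInf fun p => (hsub p p.2).nonneg x
  have happrox : ∀ (x : A) (ε : ℝ), 0 < ε → ∃ p ∈ c, p x < q x + ε := by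
    intro x ε hε
    have h : ⨅ p : c, (p : A → ℝ) x < q x + ε := lt_add_of_pos_right _ hε
    obtain ⟨p, hp⟩ := exists_lt_of_ciInf_lt h
    exact ⟨p, p.2, hp⟩
  have happrox2 : ∀ (x y : A) (ε : ℝ), 0 < ε →
      ∃ p ∈ c, p x < q x + ε ∧ p y < q y + ε := by
    intro x y ε hε
    obtain ⟨p₁, hp₁, h₁⟩ := happrox x ε hε
    obtain ⟨p₂, hp₂, h₂⟩ := happrox y ε hε
    rcases hcomp p₁ hp₁ p₂ hp₂ with h | h
    · exact ⟨p₁, hp₁, h₁, lt_of_le_of_lt (h y) h₂⟩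
    · exact ⟨p₂, hp₂, lt_of_le_of_lt (h x) h₁, h₂⟩
  have hεpos : ∀ k : ℕ, (0:ℝ) < 1/(k+1) := fun k => by positivity
  have hεseq : Filter.Tendsto (fun k : ℕ => (1 : ℝ)/((k:ℝ)+1)) atTop (nhds 0) :=
    tendsto_one_div_add_atTop_nhds_zero_nat
  refine ⟨q, ⟨?_, hq0, ?_, ?_, ?_, ?_, ?_, ?_⟩, fun p hp x => hql p hp x⟩
  · -- q 1 = 1
    refine le_antisymm ?_ (le_ciInf fun p => le_of_eq ((hsub p p.2).one).symm)
    obtain ⟨p, hp⟩ := hne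
    exact (hql p hp 1).trans (le_of_eq (hsub p hp).one)
  · -- nonarch
    intro x y
    refine ge_of_tendsto (x := atTop) (f := fun k : ℕ => max (q x + 1/((k:ℝ)+1)) (q y + 1/((k:ℝ)+1)))
      ?_ ?_
    · have := (tendsto_const_nhds (x := q x)).add hεseq
      have h2 := (tendsto_const_nhds (x := q y)).add hεseq
      simpa using this.max h2
    · filter_upwards with k
      obtain ⟨p, hp, h1, h2⟩ := happrox2 x y _ (hεpos k)
      exact (hql p hp (x + y)).trans (((hsub p hp).nonarch x y).trans
        (max_le_max h1.le h2.le))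
  · -- mul_le
    intro x y
    refine ge_of_tendsto (x := atTop) (f := fun k : ℕ => (q x + 1/((k:ℝ)+1)) * (q y + 1/((k:ℝ)+1))) ?_ ?_
    · have := ((tendsto_const_nhds (x := q x)).add hεseq).mul
        ((tendsto_const_nhds (x := q y)).add hεseq)
      simpa using this
    · filter_upwards with k
      obtain ⟨p, hp, h1, h2⟩ := happrox2 x y _ (hεpos k)
      refine (hql p hp (x * y)).trans (((hsub p hp).mul_le x y).trans ?_)
      exact mul_le_mul h1.le h2.le ((hsub p hp).nonneg y)
        (le_trans (hq0 x) (le_add_of_nonneg_right (hεpos k).le))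
  · -- neg
    intro x
    exact iInf_congr fun p => (hsub p p.2).neg x
  · -- powMul
    intro x n hn
    refine le_antisymm ?_ ?_
    · refine ge_of_tendsto (x := atTop) (f := fun k : ℕ => (q x + 1/((k:ℝ)+1)) ^ n) ?_ ?_
      · have := ((tendsto_const_nhds (x := q x)).add hεseq).pow n
        simpa using this
      · filter_upwards with k
        obtain ⟨p, hp, h1⟩ := happrox x _ (hεpos k)
        refine (hql p hp (x ^ n)).trans ?_
        rw [(hsub p hp).powMul x hn]
        exact pow_le_pow_left₀ ((hsub p hp).nonneg x) h1.le n
    · refine le_ciInf fun p => ?_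
      rw [(hsub p p.2).powMul x hn]
      exact pow_le_pow_left₀ (hq0 x) (hql p p.2 x) n
  · -- le_norm
    intro x
    obtain ⟨p, hp⟩ := hne
    exact (hql p hp x).trans ((hsub p hp).le_norm x)
  · -- mul_a
    intro x
    refine le_antisymm ?_ ?_
    · refine ge_of_tendsto (x := atTop) (f := fun k : ℕ => ‖a‖ * (q x + 1/((k:ℝ)+1))) ?_ ?_
      · have := (tendsto_const_nhds (x := ‖a‖)).mul
          ((tendsto_const_nhds (x := q x)).add hεseq)
        simpa using this
      · filter_upwards with k
        obtain ⟨p, hp, h1⟩ := happrox x _ (hεpos k)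
        refine (hql p hp (a * x)).trans ?_
        rw [(hsub p hp).mul_a x]
        exact mul_le_mul_of_nonneg_left h1.le (norm_nonneg a)
    · refine le_ciInf fun p => ?_
      rw [(hsub p p.2).mul_a x]
      exact mul_le_mul_of_nonneg_left (hql p p.2 x) (norm_nonneg a)
/-- There is a minimal good seminorm. -/
theorem exists_minimal_isGood (hnorm : IsPowMul ((‖·‖) : A → ℝ)) {a : A} (ha : a ≠ 0) :
    ∃ p : A → ℝ, IsGood a p ∧ ∀ p' : A → ℝ, IsGood a p' → p' ≤ p → p ≤ p' := by
  obtain ⟨p₀, hp₀⟩ := isGood_nonempty hnorm ha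
  have hzorn : ∀ c ⊆ {p : (A → ℝ)ᵒᵈ | IsGood a (OrderDual.ofDual p)},
      IsChain (· ≤ ·) c → ∃ ub ∈ {p : (A → ℝ)ᵒᵈ | IsGood a (OrderDual.ofDual p)},
        ∀ z ∈ c, z ≤ ub := by
    intro c hcs hchain
    rcases c.eq_empty_or_nonempty with rfl | hne
    · exact ⟨OrderDual.toDual p₀, hp₀, by simp⟩
    · have hsub : ∀ p ∈ OrderDual.ofDual '' c, IsGood a p := by
        rintro p ⟨p', hp', rfl⟩
        exact hcs hp'
      have hcomp : ∀ p₁ ∈ OrderDual.ofDual '' c, ∀ p₂ ∈ OrderDual.ofDual '' c,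
          p₁ ≤ p₂ ∨ p₂ ≤ p₁ := by
        rintro p₁ ⟨p₁', h₁, rfl⟩ p₂ ⟨p₂', h₂, rfl⟩
        rcases hchain.total h₁ h₂ with h | h
        · exact Or.inr h
        · exact Or.inl h
      obtain ⟨q, hq, hlb⟩ := chain_lb (a := a) hsub hcomp (hne.image _)
      exact ⟨OrderDual.toDual q, hq, fun z hz => hlb (OrderDual.ofDual z) ⟨z, hz, rfl⟩⟩
  obtain ⟨m, hm1, hm2⟩ := zorn_le₀ _ hzorn
  exact ⟨OrderDual.ofDual m, hm1, fun p' hp' hle => hm2 (y := OrderDual.toDual p') hp' hle⟩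

/-- Key existence theorem: for every nonzero `a` in a ring with a power-multiplicative
nonarchimedean norm, there is a *multiplicative* nonarchimedean seminorm bounded by the
norm which does not vanish at `a` (indeed takes value `‖a‖` there). -/
theorem exists_mul_seminorm (hnorm : IsPowMul ((‖·‖) : A → ℝ)) {a : A} (ha : a ≠ 0) :
    ∃ χ : A → ℝ, (∀ x y, χ (x * y) = χ x * χ y) ∧ χ 1 = 1 ∧ (∀ x, 0 ≤ χ x) ∧
      (∀ x y, χ (x + y) ≤ max (χ x) (χ y)) ∧ (∀ x, χ x ≤ ‖x‖) ∧ (∀ x, χ (-x) = χ x) ∧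
      χ a = ‖a‖ := by
  obtain ⟨p, hp, hmin⟩ := exists_minimal_isGood hnorm ha
  refine ⟨p, ?_, hp.one, hp.nonneg, hp.nonarch, hp.le_norm, hp.neg, hp.apply_a⟩
  intro x y
  by_cases hx : p x = 0
  · refine le_antisymm ?_ ?_
    · exact hp.mul_le x y
    · rw [hx, zero_mul]
      exact hp.nonneg _
  · set P : RingSeminorm A := hp.toRingSeminorm with hP
    have hf1 : P 1 ≤ 1 := le_of_eq hp.one
    have hc : P x ≠ 0 := hx
    have hpm : IsPowMul ⇑P := hp.powMul
    set p' : A → ℝ := seminormFromConst' x P with hp'def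
    have hmul : ∀ z, P (a * z) = P a * P z := by
      intro z
      show p (a * z) = p a * p z
      rw [hp.mul_a, hp.apply_a]
    have hgood : IsGood a p' := by
      refine ⟨seminormFromConst_one hf1 hc hpm,
        fun z => apply_nonneg (seminormFromConst hf1 hc hpm) z,
        seminormFromConst_isNonarchimedean hf1 hc hpm hp.nonarch,
        fun z w => map_mul_le_mul (seminormFromConst hf1 hc hpm) z w,
        fun z => map_neg_eq_map (seminormFromConst hf1 hc hpm) z,
        seminormFromConst_isPowMul hf1 hc hpm,
        fun z => (seminormFromConst_le_seminorm hf1 hc hpm z).trans (hp.le_norm z),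
        fun z => ?_⟩
      show seminormFromConst' x P (a * z) = ‖a‖ * seminormFromConst' x P z
      rw [seminormFromConst_isMul_of_isMul hf1 hc hpm hmul z,
        seminormFromConst_apply_of_isMul hf1 hc hpm hmul]
      show P a * p' z = ‖a‖ * p' z
      rw [show P a = p a from rfl, hp.apply_a]
    have hle : p' ≤ p := fun z => seminormFromConst_le_seminorm hf1 hc hpm z
    have hpe : ∀ z, p z = p' z := fun z => le_antisymm (hmin p' hgood hle z) (hle z)
    rw [hpe (x * y), hpe x, hpe y]
    show seminormFromConst' x P (x * y) = _
    rw [seminormFromConst_const_mul hf1 hc hpm y]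
/-- A nonnegative sequence tending to `0` which is somewhere positive attains its
maximum, and has a largest maximizer. -/
theorem exists_argmax {v : ℕ → ℝ} (hv0 : ∀ i, 0 ≤ v i)
    (hv : Filter.Tendsto v atTop (nhds 0)) {k : ℕ} (hk : 0 < v k) :
    ∃ d, (∀ i, v i ≤ v d) ∧ (∀ i, d < i → v i < v d) := by
  classical
  obtain ⟨N, hN⟩ : ∃ N, ∀ i ≥ N, v i < v k := by
    have h := hv.eventually (gt_mem_nhds hk)
    exact Filter.eventually_atTop.mp h
  have hkN : k < N := by
    by_contra h
    exact lt_irrefl _ (hN k (le_of_not_gt h))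
  obtain ⟨d₀, hd₀mem, hd₀⟩ := (Finset.range N).exists_max_image v
    ⟨k, Finset.mem_range.mpr hkN⟩
  have hmax : ∀ i, v i ≤ v d₀ := by
    intro i
    by_cases hi : i < N
    · exact hd₀ i (Finset.mem_range.mpr hi)
    · exact le_trans (hN i (le_of_not_gt hi)).le (hd₀ k (Finset.mem_range.mpr hkN))
  set S := (Finset.range N).filter (fun i => v d₀ ≤ v i) with hS
  have hd₀S : d₀ ∈ S := Finset.mem_filter.mpr ⟨hd₀mem, le_rfl⟩
  set d := S.max' ⟨d₀, hd₀S⟩ with hd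
  have hdS : d ∈ S := S.max'_mem _
  have hvd : v d = v d₀ := le_antisymm (hmax _) (Finset.mem_filter.mp hdS).2
  refine ⟨d, fun i => hvd ▸ hmax i, fun i hdi => ?_⟩
  rw [hvd]
  rcases lt_or_ge (v i) (v d₀) with h | h
  · exact h
  · exfalso
    have hiN : i < N := by
      by_contra hiN
      have h1 := hN i (le_of_not_gt hiN)
      have h2 : v k ≤ v d₀ := hd₀ k (Finset.mem_range.mpr hkN)
      linarith
    have hiS : i ∈ S := Finset.mem_filter.mpr ⟨Finset.mem_range.mpr hiN, h⟩
    exact absurd (S.le_max' i hiS) (by omega)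

/-- Strict nonarchimedean bound for finite sums. -/
theorem sum_lt {ι : Type*} {χ : A → ℝ} (hna : ∀ x y, χ (x + y) ≤ max (χ x) (χ y))
    (h0 : χ 0 = 0) {M : ℝ} (hM : 0 < M) (s : Finset ι) (v : ι → A)
    (h : ∀ i ∈ s, χ (v i) < M) : χ (∑ i ∈ s, v i) < M := by
  classical
  have H : ∀ s : Finset ι, (∀ i ∈ s, χ (v i) < M) → χ (∑ i ∈ s, v i) < M := by
    intro s
    induction s using Finset.induction_on with
    | empty => intro _; simpa [h0] using hM
    | insert _ _ hx ih =>
      intro h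
      rw [Finset.sum_insert hx]
      exact lt_of_le_of_lt (hna _ _) (max_lt (h _ (Finset.mem_insert_self _ _))
        (ih fun i hi => h i (Finset.mem_insert_of_mem hi)))
  exact H s h

open PowerSeries in
/-- The key step: if `f * g = 1` with both entire, then all positive coefficients of `f`
vanish. -/
theorem coeff_eq_zero_of_mul_eq_one (hnorm : IsPowMul ((‖·‖) : A → ℝ))
    (f g : PowerSeries A)
    (hf : ∀ r : ℝ, 0 < r →
      Filter.Tendsto (fun i : ℕ => ‖(coeff i) f‖ * r ^ i) atTop (nhds 0))
    (hg : ∀ r : ℝ, 0 < r →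
      Filter.Tendsto (fun i : ℕ => ‖(coeff i) g‖ * r ^ i) atTop (nhds 0))
    (hfg : f * g = 1) {i₀ : ℕ} (hi₀ : 1 ≤ i₀) : coeff i₀ f = 0 := by
  by_contra ha
  obtain ⟨χ, hχmul, hχ1, hχ0, hχna, hχle, hχneg, hχa⟩ := exists_mul_seminorm hnorm ha
  have hχzero : χ 0 = 0 := le_antisymm (by simpa using hχle 0) (hχ0 0)
  set F : ℕ → A := fun i => coeff i f with hF
  set G : ℕ → A := fun i => coeff i g with hG
  have hFG0 : F 0 * G 0 = 1 := by
    have h := congrArg (constantCoeff) hfg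
    rw [map_mul, map_one] at h
    simpa [hF, hG, coeff_zero_eq_constantCoeff] using h
  have hprod : χ (F 0) * χ (G 0) = 1 := by rw [← hχmul, hFG0, hχ1]
  have hG0pos : 0 < χ (G 0) := by nlinarith [hχ0 (G 0), hχ0 (F 0)]
  have hF0pos : 0 < χ (F 0) := by nlinarith [hχ0 (G 0), hχ0 (F 0)]
  have hapos : 0 < χ (F i₀) := by
    rw [hF]
    rw [hχa]
    exact norm_pos_iff.mpr ha
  set r : ℝ := max 1 ((χ (F 0) + 1) / χ (F i₀)) with hr
  have hr1 : (1:ℝ) ≤ r := le_max_left _ _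
  have hrpos : (0:ℝ) < r := lt_of_lt_of_le one_pos hr1
  set vf : ℕ → ℝ := fun i => χ (F i) * r ^ i with hvf
  set vg : ℕ → ℝ := fun i => χ (G i) * r ^ i with hvg
  have hvf0 : ∀ i, 0 ≤ vf i := fun i => mul_nonneg (hχ0 _) (pow_nonneg hrpos.le i)
  have hvg0 : ∀ i, 0 ≤ vg i := fun i => mul_nonneg (hχ0 _) (pow_nonneg hrpos.le i)
  have hvftend : Filter.Tendsto vf atTop (nhds 0) :=
    squeeze_zero hvf0 (fun i => mul_le_mul_of_nonneg_right (hχle _) (pow_nonneg hrpos.le i))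
      (hf r hrpos)
  have hvgtend : Filter.Tendsto vg atTop (nhds 0) :=
    squeeze_zero hvg0 (fun i => mul_le_mul_of_nonneg_right (hχle _) (pow_nonneg hrpos.le i))
      (hg r hrpos)
  have hvfi₀pos : 0 < vf i₀ := mul_pos hapos (pow_pos hrpos i₀)
  have hvfi₀ : χ (F 0) < vf i₀ := by
    have h1 : χ (F 0) + 1 ≤ χ (F i₀) * r := by
      have := le_max_right 1 ((χ (F 0) + 1) / χ (F i₀))
      rw [div_le_iff₀ hapos] at this
      linarith [this]
    have h2 : χ (F i₀) * r ≤ χ (F i₀) * r ^ i₀ := by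
      have : r ^ 1 ≤ r ^ i₀ := pow_le_pow_right₀ hr1 hi₀
      rw [pow_one] at this
      exact mul_le_mul_of_nonneg_left this hapos.le
    have : vf i₀ = χ (F i₀) * r ^ i₀ := rfl
    linarith
  have hvg0pos : 0 < vg 0 := by
    have : vg 0 = χ (G 0) := by simp [hvg]
    rw [this]; exact hG0pos
  obtain ⟨d, hdmax, hdtop⟩ := exists_argmax hvf0 hvftend hvfi₀pos
  obtain ⟨e, hemax, hetop⟩ := exists_argmax hvg0 hvgtend hvg0pos
  have hvdpos : 0 < vf d := lt_of_lt_of_le hvfi₀pos (hdmax i₀)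
  have hvepos : 0 < vg e := lt_of_lt_of_le hvg0pos (hemax 0)
  have hd1 : 0 < d := by
    rcases Nat.eq_zero_or_pos d with h | h
    · exfalso
      have : vf d = χ (F 0) := by simp [hvf, h]
      have h2 := hdmax i₀
      linarith
    · exact h
  have hFdpos : 0 < χ (F d) := by
    by_contra h
    push_neg at h
    have : vf d ≤ 0 := mul_nonpos_of_nonpos_of_nonneg h (pow_nonneg hrpos.le d)
    linarith
  have hGepos : 0 < χ (G e) := by
    by_contra h
    push_neg at h
    have : vg e ≤ 0 := mul_nonpos_of_nonpos_of_nonneg h (pow_nonneg hrpos.le e)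
    linarith
  have hMpos : 0 < χ (F d) * χ (G e) := mul_pos hFdpos hGepos
  have hNne : d + e ≠ 0 := by omega
  have hcoeff : (∑ p ∈ Finset.HasAntidiagonal.antidiagonal (d + e), F p.1 * G p.2) = 0 := by
    have h := PowerSeries.coeff_mul (d + e) f g
    rw [hfg, PowerSeries.coeff_one, if_neg hNne] at h
    exact h.symm
  have hterm : ∀ p ∈ Finset.HasAntidiagonal.antidiagonal (d + e), p ≠ (d, e) →
      χ (F p.1 * G p.2) < χ (F d) * χ (G e) := by
    intro p hp hpne
    rw [hχmul]
    have hsum : p.1 + p.2 = d + e := Finset.HasAntidiagonal.mem_antidiagonal.mp hp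
    have hkey : vf p.1 * vg p.2 < vf d * vg e := by
      rcases lt_trichotomy p.1 d with h | h | h
      · have hj : e < p.2 := by omega
        have h1 : vg p.2 < vg e := hetop p.2 hj
        have h2 : vf p.1 ≤ vf d := hdmax p.1
        calc vf p.1 * vg p.2 ≤ vf d * vg p.2 :=
              mul_le_mul_of_nonneg_right h2 (hvg0 p.2)
          _ < vf d * vg e := by
              exact mul_lt_mul_of_pos_left h1 hvdpos
      · exfalso
        apply hpne
        have : p.2 = e := by omega
        exact Prod.ext h this
      · have h1 : vf p.1 < vf d := hdtop p.1 h
        have h2 : vg p.2 ≤ vg e := hemax p.2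
        calc vf p.1 * vg p.2 ≤ vf p.1 * vg e :=
              mul_le_mul_of_nonneg_left h2 (hvf0 p.1)
          _ < vf d * vg e := mul_lt_mul_of_pos_right h1 hvepos
    have hpow : (0:ℝ) < r ^ (d + e) := pow_pos hrpos _
    have hlhs : χ (F p.1) * χ (G p.2) * r ^ (d + e) = vf p.1 * vg p.2 := by
      rw [← hsum, pow_add, hvf, hvg]; ring
    have hrhs : χ (F d) * χ (G e) * r ^ (d + e) = vf d * vg e := by
      rw [pow_add, hvf, hvg]; ring
    have := hkey
    rw [← hlhs, ← hrhs] at this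
    exact lt_of_mul_lt_mul_right (by linarith) hpow.le
  have hmem : (d, e) ∈ Finset.HasAntidiagonal.antidiagonal (d + e) := Finset.HasAntidiagonal.mem_antidiagonal.mpr rfl
  have hrest : χ (∑ p ∈ (Finset.HasAntidiagonal.antidiagonal (d + e)).erase (d, e), F p.1 * G p.2) <
      χ (F d) * χ (G e) :=
    sum_lt hχna hχzero hMpos _ _ (fun p hp =>
      hterm p (Finset.mem_of_mem_erase hp) (Finset.ne_of_mem_erase hp))
  have hEq : F d * G e = (∑ p ∈ Finset.HasAntidiagonal.antidiagonal (d + e), F p.1 * G p.2) -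
      (∑ p ∈ (Finset.HasAntidiagonal.antidiagonal (d + e)).erase (d, e), F p.1 * G p.2) := by
    rw [← Finset.add_sum_erase _ _ hmem]
    ring
  have hle : χ (F d * G e) ≤
      χ (∑ p ∈ (Finset.HasAntidiagonal.antidiagonal (d + e)).erase (d, e), F p.1 * G p.2) := by
    rw [hEq, hcoeff, zero_sub]
    exact le_of_eq (hχneg _)
  have := hχmul (F d) (G e)
  linarith [hle, hrest, hχmul (F d) (G e)]

end EntireUnitsAux

end

/-- A power series `f = Σ fᵢ Tⁱ` over a normed ring `A` lies in
`E(A) = 𝒪(Sp A × 𝔸¹_rig)` (the everywhere-convergent power series) if for every real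
`r > 0` the sequence `‖fᵢ‖ * rⁱ` tends to `0`. -/
def IsEntireOver {A : Type*} [NormedRing A] (f : PowerSeries A) : Prop :=
  ∀ r : ℝ, 0 < r →
    Filter.Tendsto (fun i : ℕ => ‖(PowerSeries.coeff i) f‖ * r ^ i) Filter.atTop (nhds 0)

/-- Let `A` be a commutative ring, complete with respect to a power-multiplicative
nonarchimedean ring norm.  A power series `f = Σ fᵢ Tⁱ ∈ E(A)` is a unit of `E(A)` if and
only if `f₀` is a unit of `A` and `fᵢ = 0` for all `i ≥ 1`; that is,
`E(A)^× ≅ A^×` (the statement `𝒪(Sp A × 𝔸¹_rig)^× ≅ A^×`). -/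
theorem isUnit_entireOver_iff_constant {A : Type*} [NormedCommRing A] [NormOneClass A]
    [IsUltrametricDist A] [CompleteSpace A]
    (hpm : ∀ (a : A) (n : ℕ), 1 ≤ n → ‖a ^ n‖ = ‖a‖ ^ n)
    (f : PowerSeries A) (hf : IsEntireOver f) :
    (∃ g : PowerSeries A, IsEntireOver g ∧ f * g = 1) ↔
      (IsUnit ((PowerSeries.coeff 0) f) ∧
        ∀ i : ℕ, 1 ≤ i → (PowerSeries.coeff i) f = 0) := by
  have hnorm : IsPowMul ((‖·‖) : A → ℝ) := by
    intro a n hn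
    exact hpm a n hn
  constructor
  · rintro ⟨g, hg, hfg⟩
    constructor
    · have h0 : (PowerSeries.constantCoeff) f * (PowerSeries.constantCoeff) g = 1 := by
        rw [← map_mul, hfg, map_one]
      have h1 := IsUnit.of_mul_eq_one _ h0
      simpa [PowerSeries.coeff_zero_eq_constantCoeff] using h1
    · intro i hi
      exact EntireUnitsAux.coeff_eq_zero_of_mul_eq_one hnorm f g hf hg hfg hi
  · rintro ⟨hu, hzero⟩
    obtain ⟨b, hb⟩ := hu.exists_right_inv
    refine ⟨PowerSeries.C b, ?_, ?_⟩
    · intro r hr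
      have hev : ∀ᶠ i in Filter.atTop,
          ‖(PowerSeries.coeff i) (PowerSeries.C b)‖ * r ^ i = 0 := by
        filter_upwards [Filter.eventually_ge_atTop 1] with i hi
        rw [PowerSeries.coeff_C, if_neg (by omega), norm_zero, zero_mul]
      refine (tendsto_congr' ?_).mpr (tendsto_const_nhds (x := (0:ℝ)))
      filter_upwards [hev] with i hi
      exact hi
    · have hfC : f = PowerSeries.C ((PowerSeries.coeff 0) f) := by
        ext n
        rcases Nat.eq_zero_or_pos n with h | h
        · subst h
          simp [PowerSeries.coeff_C]
        · rw [hzero n h, PowerSeries.coeff_C, if_neg (by omega)]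
      rw [hfC, ← map_mul, hb, map_one]
end

section
/- Let A be a commutative ring equipped with a nonarchimedean ring norm ‖·‖, let r ≥ 1 be a real number, and let f = 1 + Σ_{i≥1} fᵢTⁱ ∈ A[[T]] be a power series with constant coefficient 1 such that ‖fᵢ‖·rⁱ < 1 for all i ≥ 1. If g = Σ_{i≥0} gᵢTⁱ ∈ A[[T]] satisfies f·g = 1 in A[[T]], then g₀ = 1 and ‖gᵢ‖·rⁱ < 1 for all i ≥ 1. -/
/-- Let `A` be a commutative ring with a nonarchimedean ring norm (submultiplicative, with
`‖1‖ = 1` and the ultrametric triangle inequality), let `r ≥ 1` be real, and let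
`f = 1 + Σ_{i≥1} fᵢ Tⁱ` be a power series with constant coefficient `1` such that
`‖fᵢ‖ * rⁱ < 1` for all `i ≥ 1`.  If `g = Σ gᵢ Tⁱ` satisfies `f * g = 1` in `A[[T]]`,
then `g₀ = 1` and `‖gᵢ‖ * rⁱ < 1` for all `i ≥ 1`. -/
theorem inverse_coeff_norm_lt_one {A : Type*} [NormedCommRing A] [NormOneClass A]
    [IsUltrametricDist A]
    (r : ℝ) (hr : 1 ≤ r) (f g : PowerSeries A)
    (hf0 : (PowerSeries.coeff (R := A) 0) f = 1)
    (hf : ∀ i : ℕ, 1 ≤ i → ‖(PowerSeries.coeff (R := A) i) f‖ * r ^ i < 1)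
    (hfg : f * g = 1) :
    (PowerSeries.coeff (R := A) 0) g = 1 ∧
      ∀ i : ℕ, 1 ≤ i → ‖(PowerSeries.coeff (R := A) i) g‖ * r ^ i < 1 := by
  have hr0 : (0:ℝ) < r := lt_of_lt_of_le one_pos hr
  have hg0 : (PowerSeries.coeff (R := A) 0) g = 1 := by
    have := congrArg (PowerSeries.coeff (R := A) 0) hfg
    have hf0' := hf0
    rw [PowerSeries.coeff_zero_eq_constantCoeff] at hf0'
    simpa [PowerSeries.coeff_zero_eq_constantCoeff, map_mul, hf0'] using this
  refine ⟨hg0, ?_⟩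
  intro i
  induction i using Nat.strong_induction_on with
  | _ i ih =>
    intro hi
    have h0 : (PowerSeries.coeff (R := A) i) (f * g) = 0 := by
      rw [hfg, PowerSeries.coeff_one, if_neg (by omega)]
    rw [PowerSeries.coeff_mul, Finset.Nat.sum_antidiagonal_eq_sum_range_succ_mk,
      Finset.sum_range_succ'] at h0
    have hrec : (PowerSeries.coeff (R := A) i) g
        = -∑ k ∈ Finset.range i, (PowerSeries.coeff (R := A) (k+1)) f
            * (PowerSeries.coeff (R := A) (i - (k+1))) g := by
      rw [hf0, one_mul, Nat.sub_zero] at h0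
      linear_combination h0
    have hne : (Finset.range i).Nonempty := by
      simp [Finset.nonempty_range_iff]; omega
    obtain ⟨k, hk, hle⟩ := IsUltrametricDist.exists_norm_finset_sum_le_of_nonempty hne
      (fun k => (PowerSeries.coeff (R := A) (k+1)) f * (PowerSeries.coeff (R := A) (i - (k+1))) g)
    rw [Finset.mem_range] at hk
    have hnorm : ‖(PowerSeries.coeff (R := A) i) g‖
        ≤ ‖(PowerSeries.coeff (R := A) (k+1)) f‖ * ‖(PowerSeries.coeff (R := A) (i - (k+1))) g‖ := by
      rw [hrec, norm_neg]
      exact hle.trans (norm_mul_le _ _)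
    have hsplit : r ^ i = r ^ (k+1) * r ^ (i - (k+1)) := by
      rw [← pow_add]; congr 1; omega
    have hbound : ‖(PowerSeries.coeff (R := A) i) g‖ * r ^ i
        ≤ (‖(PowerSeries.coeff (R := A) (k+1)) f‖ * r ^ (k+1))
          * (‖(PowerSeries.coeff (R := A) (i - (k+1))) g‖ * r ^ (i - (k+1))) := by
      rw [hsplit]
      calc ‖(PowerSeries.coeff (R := A) i) g‖ * (r ^ (k+1) * r ^ (i - (k+1)))
          ≤ (‖(PowerSeries.coeff (R := A) (k+1)) f‖ * ‖(PowerSeries.coeff (R := A) (i - (k+1))) g‖)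
            * (r ^ (k+1) * r ^ (i - (k+1))) := by
            apply mul_le_mul_of_nonneg_right hnorm (by positivity)
        _ = _ := by ring
    have hf' : ‖(PowerSeries.coeff (R := A) (k+1)) f‖ * r ^ (k+1) < 1 := hf _ (by omega)
    have hg' : ‖(PowerSeries.coeff (R := A) (i - (k+1))) g‖ * r ^ (i - (k+1)) ≤ 1 := by
      rcases Nat.eq_zero_or_pos (i - (k+1)) with h | h
      · rw [h, hg0]; simp
      · exact le_of_lt (ih _ (by omega) h)
    calc ‖(PowerSeries.coeff (R := A) i) g‖ * r ^ i
        ≤ (‖(PowerSeries.coeff (R := A) (k+1)) f‖ * r ^ (k+1))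
          * (‖(PowerSeries.coeff (R := A) (i - (k+1))) g‖ * r ^ (i - (k+1))) := hbound
      _ ≤ (‖(PowerSeries.coeff (R := A) (k+1)) f‖ * r ^ (k+1)) * 1 :=
          mul_le_mul_of_nonneg_left hg' (by positivity)
      _ = ‖(PowerSeries.coeff (R := A) (k+1)) f‖ * r ^ (k+1) := mul_one _
      _ < 1 := hf'
end
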